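/- arXiv:1602.02605 — 2 statements merged into one kernel-verified Lean document; each statement's English description precedes it below -/
import Mathlib

section
/- Let $X$ and $Y$ be independent random variables with continuous distributions, where $\mathbb{P}(X>z)=z^{-1/\gamma_1}\ell_1(z)$ and $\mathbb{P}(Y>z)=z^{-1/\gamma_2}\ell_2(z)$ with $\ell_1,\ell_2$ slowly varying. Set $Z=\min(X,Y)$, $\delta=\mathbf{1}\{X\leq Y\}$, and $\overline{H}^{(1)}(v)=\mathbb{P}(Z>v,\delta=1)$, $\overline{H}(v)=\mathbb{P}(Z>v)$. Then $\lim_{v\to\infty}\overline{H}^{(1)}(v)/\overline{H}(v)=p$, where $p=\gamma_2/(\gamma_1+\gamma_2)$. -/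
open Filter Real MeasureTheory ProbabilityTheory Topology

section Helpers

lemma slope_lim (d : ℝ) :
    Tendsto (fun x : ℝ => (1 - x ^ (-d)) / (x - 1)) (𝓝[≠] (1:ℝ)) (nhds d) := by
  have h : HasDerivAt (fun x : ℝ => 1 - x ^ (-d)) d 1 := by
    have h1 := (Real.hasDerivAt_rpow_const (x := (1:ℝ)) (p := -d) (Or.inl one_ne_zero)).const_sub 1
    refine h1.congr_deriv ?_
    simp
  have h2 := hasDerivAt_iff_tendsto_slope.mp h
  refine h2.congr fun x => ?_
  simp [slope_def_field]

lemma qlim (a c : ℝ) (hc : 0 < c) :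
    Tendsto (fun x : ℝ => (1 - x ^ (-a)) / (1 - x ^ (-c))) (𝓝[>] (1:ℝ)) (nhds (a / c)) := by
  have key := (slope_lim a).div (slope_lim c) (ne_of_gt hc)
  have hmono : 𝓝[>] (1:ℝ) ≤ 𝓝[≠] (1:ℝ) :=
    nhdsWithin_mono _ (fun x hx => ne_of_gt hx)
  refine (key.mono_left hmono).congr' ?_
  filter_upwards [self_mem_nhdsWithin] with x hx
  have hx1 : x - 1 ≠ 0 := sub_ne_zero.mpr (ne_of_gt hx)
  simp only [Pi.div_apply]
  field_simp

variable {Ω : Type*} [MeasureSpace Ω] [IsProbabilityMeasure (ℙ : Measure Ω)]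
  {X Y : Ω → ℝ}

lemma prod_formula (hind : IndepFun X Y) (s t : Set ℝ) (hs : MeasurableSet s) (ht : MeasurableSet t) :
    (ℙ (X ⁻¹' s ∩ Y ⁻¹' t)).toReal = (ℙ (X ⁻¹' s)).toReal * (ℙ (Y ⁻¹' t)).toReal := by
  rw [hind.measure_inter_preimage_eq_mul s t hs ht, ENNReal.toReal_mul]

lemma Ioc_split (hX : Measurable X) (u w : ℝ) (huw : u ≤ w) :
    (ℙ (X ⁻¹' Set.Ioc u w)).toReal
      = (ℙ {ω | u < X ω}).toReal - (ℙ {ω | w < X ω}).toReal := by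
  have hset : {ω | u < X ω} = X ⁻¹' Set.Ioc u w ∪ {ω | w < X ω} := by
    ext ω
    simp only [Set.mem_setOf_eq, Set.mem_union, Set.mem_preimage, Set.mem_Ioc]
    constructor
    · intro h
      rcases le_or_gt (X ω) w with h2 | h2
      · exact Or.inl ⟨h, h2⟩
      · exact Or.inr h2
    · rintro (⟨h, _⟩ | h)
      · exact h
      · exact lt_of_le_of_lt huw h
  have hdisj : Disjoint (X ⁻¹' Set.Ioc u w) {ω | w < X ω} := by
    rw [Set.disjoint_left]
    rintro ω ⟨_, h2⟩ h3
    exact absurd h3 (not_lt.mpr h2)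
  have hmeas : MeasurableSet {ω | w < X ω} := hX measurableSet_Ioi
  have := measure_union (μ := ℙ) hdisj hmeas
  rw [← hset] at this
  rw [eq_sub_iff_add_eq, ← ENNReal.toReal_add (measure_ne_top _ _) (measure_ne_top _ _), ← this]

lemma M_step (hX : Measurable X) (hY : Measurable Y) (hind : IndepFun X Y) (u w : ℝ) (huw : u ≤ w) :
    ((ℙ (X ⁻¹' Set.Ioc u w)).toReal * (ℙ {ω | w < Y ω}).toReal
      ≤ (ℙ {ω | u < X ω ∧ X ω ≤ Y ω}).toReal - (ℙ {ω | w < X ω ∧ X ω ≤ Y ω}).toReal) ∧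
    ((ℙ {ω | u < X ω ∧ X ω ≤ Y ω}).toReal - (ℙ {ω | w < X ω ∧ X ω ≤ Y ω}).toReal
      ≤ (ℙ (X ⁻¹' Set.Ioc u w)).toReal * (ℙ {ω | u < Y ω}).toReal) := by
  have hXY : MeasurableSet {ω | X ω ≤ Y ω} := measurableSet_le hX hY
  set B : Set Ω := X ⁻¹' Set.Ioc u w ∩ {ω | X ω ≤ Y ω} with hB
  have hsplit : {ω | u < X ω ∧ X ω ≤ Y ω} = B ∪ {ω | w < X ω ∧ X ω ≤ Y ω} := by
    ext ω
    simp only [hB, Set.mem_setOf_eq, Set.mem_union, Set.mem_inter_iff, Set.mem_preimage,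
      Set.mem_Ioc]
    constructor
    · rintro ⟨h1, h2⟩
      rcases le_or_gt (X ω) w with h3 | h3
      · exact Or.inl ⟨⟨h1, h3⟩, h2⟩
      · exact Or.inr ⟨h3, h2⟩
    · rintro (⟨⟨h1, _⟩, h2⟩ | ⟨h1, h2⟩)
      · exact ⟨h1, h2⟩
      · exact ⟨lt_of_le_of_lt huw h1, h2⟩
  have hdisj : Disjoint B {ω | w < X ω ∧ X ω ≤ Y ω} := by
    rw [Set.disjoint_left]
    rintro ω ⟨h1, _⟩ ⟨h3, _⟩
    exact absurd h3 (not_lt.mpr h1.2)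
  have hmeas2 : MeasurableSet {ω | w < X ω ∧ X ω ≤ Y ω} := by
    have : {ω | w < X ω ∧ X ω ≤ Y ω} = X ⁻¹' Set.Ioi w ∩ {ω | X ω ≤ Y ω} := rfl
    rw [this]; exact (hX measurableSet_Ioi).inter hXY
  have hdecomp : (ℙ {ω | u < X ω ∧ X ω ≤ Y ω}).toReal
      = (ℙ B).toReal + (ℙ {ω | w < X ω ∧ X ω ≤ Y ω}).toReal := by
    rw [hsplit, measure_union hdisj hmeas2,
      ENNReal.toReal_add (measure_ne_top _ _) (measure_ne_top _ _)]
  have hlow : (ℙ (X ⁻¹' Set.Ioc u w ∩ Y ⁻¹' Set.Ioi w)).toReal ≤ (ℙ B).toReal := by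
    apply ENNReal.toReal_mono (measure_ne_top _ _)
    apply measure_mono
    rintro ω ⟨h1, h2⟩
    exact ⟨h1, le_of_lt (lt_of_le_of_lt h1.2 h2)⟩
  have hup : (ℙ B).toReal ≤ (ℙ (X ⁻¹' Set.Ioc u w ∩ Y ⁻¹' Set.Ioi u)).toReal := by
    apply ENNReal.toReal_mono (measure_ne_top _ _)
    apply measure_mono
    rintro ω ⟨h1, h2⟩
    exact ⟨h1, lt_of_lt_of_le h1.1 h2⟩
  rw [prod_formula hind _ _ measurableSet_Ioc measurableSet_Ioi] at hlow hup
  have e1 : Y ⁻¹' Set.Ioi w = {ω | w < Y ω} := rfl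
  have e2 : Y ⁻¹' Set.Ioi u = {ω | u < Y ω} := rfl
  rw [e1] at hlow
  rw [e2] at hup
  constructor
  · rw [hdecomp]; linarith
  · rw [hdecomp]; linarith

lemma M_le (hind : IndepFun X Y) (u : ℝ) :
    (ℙ {ω | u < X ω ∧ X ω ≤ Y ω}).toReal
      ≤ (ℙ {ω | u < X ω}).toReal * (ℙ {ω | u < Y ω}).toReal := by
  have h1 : {ω | u < X ω ∧ X ω ≤ Y ω} ⊆ X ⁻¹' Set.Ioi u ∩ Y ⁻¹' Set.Ioi u := by
    rintro ω ⟨h1, h2⟩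
    exact ⟨h1, lt_of_lt_of_le h1 h2⟩
  calc (ℙ {ω | u < X ω ∧ X ω ≤ Y ω}).toReal
      ≤ (ℙ (X ⁻¹' Set.Ioi u ∩ Y ⁻¹' Set.Ioi u)).toReal :=
        ENNReal.toReal_mono (measure_ne_top _ _) (measure_mono h1)
    _ = _ := prod_formula hind _ _ measurableSet_Ioi measurableSet_Ioi

end Helpers

lemma ratio_tendsto (F ℓ : ℝ → ℝ) (a : ℝ)
    (hℓpos : ∀ z > 0, 0 < ℓ z) (hℓ : ∀ x > 0, Tendsto (fun z => ℓ (x*z)/ℓ z) atTop (nhds 1))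
    (hFtail : ∀ z > 0, F z = z ^ (-a) * ℓ z) (c : ℝ) (hc : 0 < c) :
    Tendsto (fun v => F (c*v) / F v) atTop (nhds (c ^ (-a))) := by
  have h := (hℓ c hc).const_mul (c ^ (-a))
  rw [mul_one] at h
  refine h.congr' ?_
  filter_upwards [eventually_gt_atTop 0] with v hv
  have hcv : 0 < c * v := mul_pos hc hv
  rw [hFtail _ hcv, hFtail _ hv, Real.mul_rpow hc.le hv.le]
  have h1 : v ^ (-a) ≠ 0 := ne_of_gt (Real.rpow_pos_of_pos hv _)
  have h2 : ℓ v ≠ 0 := ne_of_gt (hℓpos v hv)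
  field_simp

lemma telescope (M F G : ℝ → ℝ) (t : ℕ → ℝ)
    (hstep : ∀ k, (F (t k) - F (t (k+1))) * G (t (k+1)) ≤ M (t k) - M (t (k+1)) ∧
      M (t k) - M (t (k+1)) ≤ (F (t k) - F (t (k+1))) * G (t k)) :
    ∀ N, (∑ k ∈ Finset.range N, (F (t k) - F (t (k+1))) * G (t (k+1))) ≤ M (t 0) - M (t N) ∧
      M (t 0) - M (t N) ≤ ∑ k ∈ Finset.range N, (F (t k) - F (t (k+1))) * G (t k) := by
  intro N
  induction N with
  | zero => simp
  | succ n ih =>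
    rw [Finset.sum_range_succ, Finset.sum_range_succ]
    obtain ⟨h1, h2⟩ := hstep n
    exact ⟨by linarith [ih.1], by linarith [ih.2]⟩

lemma pow_rpow_comm {x : ℝ} (hx : 0 < x) (k : ℕ) (c : ℝ) :
    ((x^k : ℝ)) ^ (-c) = (x ^ (-c))^k := by
  rw [← Real.rpow_natCast x k, ← Real.rpow_natCast (x ^ (-c)) k, ← Real.rpow_mul hx.le,
    ← Real.rpow_mul hx.le, mul_comm]

set_option maxHeartbeats 2000000 in
/-- Under random censoring with heavy-tailed `X` and `Y`, the proportion of uncensored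
observations in the tail converges: `H̄⁽¹⁾(v)/H̄(v) → p = γ₂/(γ₁+γ₂)` as `v → ∞`. -/
theorem stmt_8 {Ω : Type*} [MeasureSpace Ω] [IsProbabilityMeasure (ℙ : Measure Ω)]
    (X Y : Ω → ℝ) (hX : Measurable X) (hY : Measurable Y) (hind : IndepFun X Y)
    (hFcont : Continuous fun z => (ℙ {ω | X ω ≤ z}).toReal)
    (hGcont : Continuous fun z => (ℙ {ω | Y ω ≤ z}).toReal)
    (γ₁ γ₂ : ℝ) (hγ₁ : 0 < γ₁) (hγ₂ : 0 < γ₂) (ℓ₁ ℓ₂ : ℝ → ℝ)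
    (hℓ₁pos : ∀ z > 0, 0 < ℓ₁ z) (hℓ₂pos : ∀ z > 0, 0 < ℓ₂ z)
    (hℓ₁ : ∀ x > 0, Tendsto (fun z => ℓ₁ (x * z) / ℓ₁ z) atTop (nhds 1))
    (hℓ₂ : ∀ x > 0, Tendsto (fun z => ℓ₂ (x * z) / ℓ₂ z) atTop (nhds 1))
    (hFtail : ∀ z > 0, (ℙ {ω | z < X ω}).toReal = z ^ (-(1 / γ₁)) * ℓ₁ z)
    (hGtail : ∀ z > 0, (ℙ {ω | z < Y ω}).toReal = z ^ (-(1 / γ₂)) * ℓ₂ z) :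
    Tendsto (fun v => (ℙ {ω | v < min (X ω) (Y ω) ∧ X ω ≤ Y ω}).toReal /
        (ℙ {ω | v < min (X ω) (Y ω)}).toReal) atTop (nhds (γ₂ / (γ₁ + γ₂))) := by
  set a : ℝ := 1 / γ₁ with ha_def
  set b : ℝ := 1 / γ₂ with hb_def
  have ha : 0 < a := by positivity
  have hb : 0 < b := by positivity
  set F : ℝ → ℝ := fun z => (ℙ {ω | z < X ω}).toReal with hFdef
  set G : ℝ → ℝ := fun z => (ℙ {ω | z < Y ω}).toReal with hGdef
  set M : ℝ → ℝ := fun z => (ℙ {ω | z < X ω ∧ X ω ≤ Y ω}).toReal with hMdef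
  -- positivity of F, G
  have hFpos : ∀ v > 0, 0 < F v := by
    intro v hv
    rw [hFdef]
    simp only
    rw [hFtail v hv]
    exact mul_pos (Real.rpow_pos_of_pos hv _) (hℓ₁pos v hv)
  have hGpos : ∀ v > 0, 0 < G v := by
    intro v hv
    rw [hGdef]
    simp only
    rw [hGtail v hv]
    exact mul_pos (Real.rpow_pos_of_pos hv _) (hℓ₂pos v hv)
  -- ratio limits
  have hFr : ∀ c > 0, Tendsto (fun v => F (c*v) / F v) atTop (nhds (c ^ (-a))) := by
    intro c hc
    exact ratio_tendsto F ℓ₁ a hℓ₁pos hℓ₁ (fun z hz => hFtail z hz) c hc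
  have hGr : ∀ c > 0, Tendsto (fun v => G (c*v) / G v) atTop (nhds (c ^ (-b))) := by
    intro c hc
    exact ratio_tendsto G ℓ₂ b hℓ₂pos hℓ₂ (fun z hz => hGtail z hz) c hc
  -- rewrite the goal
  have hp : γ₂ / (γ₁ + γ₂) = a / (a + b) := by
    rw [ha_def, hb_def, div_eq_div_iff (by positivity) (by positivity)]
    field_simp
    ring
  have hgoal : (fun v => (ℙ {ω | v < min (X ω) (Y ω) ∧ X ω ≤ Y ω}).toReal /
      (ℙ {ω | v < min (X ω) (Y ω)}).toReal) = fun v => M v / (F v * G v) := by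
    funext v
    have e1 : {ω | v < min (X ω) (Y ω) ∧ X ω ≤ Y ω} = {ω | v < X ω ∧ X ω ≤ Y ω} := by
      ext ω
      simp only [Set.mem_setOf_eq, lt_min_iff]
      constructor
      · rintro ⟨⟨h1, _⟩, h3⟩; exact ⟨h1, h3⟩
      · rintro ⟨h1, h3⟩; exact ⟨⟨h1, lt_of_lt_of_le h1 h3⟩, h3⟩
    have e2 : {ω | v < min (X ω) (Y ω)} = X ⁻¹' Set.Ioi v ∩ Y ⁻¹' Set.Ioi v := by
      ext ω
      simp only [Set.mem_setOf_eq, lt_min_iff, Set.mem_inter_iff, Set.mem_preimage, Set.mem_Ioi]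
    rw [e1, e2, prod_formula hind _ _ measurableSet_Ioi measurableSet_Ioi]
    rfl
  rw [hgoal, hp]
  set p : ℝ := a / (a + b) with hp_def
  have hppos : 0 < p := by positivity
  have hplt : p < 1 := by
    rw [hp_def, div_lt_one (by positivity)]; linarith
  -- main epsilon argument
  rw [Metric.tendsto_nhds]
  intro ε hε
  set ε' : ℝ := min (ε/4) (p/2) with hε'_def
  have hε'pos : 0 < ε' := lt_min (by positivity) (by positivity)
  have hε'ε : ε' ≤ ε/4 := min_le_left _ _
  have hε'p : ε' ≤ p/2 := min_le_right _ _
  -- choose x > 1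
  have hq := qlim a (a+b) (by positivity)
  have hs1 : Tendsto (fun x : ℝ => x ^ (-b)) (𝓝[>] (1:ℝ)) (nhds 1) := by
    have hcont : ContinuousAt (fun x : ℝ => x ^ (-b)) 1 :=
      Real.continuousAt_rpow_const 1 (-b) (Or.inl one_ne_zero)
    have := hcont.tendsto.mono_left (nhdsWithin_le_nhds (s := Set.Ioi (1:ℝ)))
    simpa using this
  have hqev : ∀ᶠ x in 𝓝[>] (1:ℝ), |(1 - x ^ (-a)) / (1 - x ^ (-(a+b))) - p| < ε' := by
    have := Metric.tendsto_nhds.mp hq ε' hε'pos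
    simpa [Real.dist_eq, hp_def] using this
  have hsev : ∀ᶠ x in 𝓝[>] (1:ℝ), 1 - ε' < x ^ (-b) :=
    hs1.eventually (eventually_gt_nhds (by linarith : 1 - ε' < 1))
  obtain ⟨x, hx1, hxq, hxs⟩ : ∃ x : ℝ, 1 < x ∧
      |(1 - x ^ (-a)) / (1 - x ^ (-(a+b))) - p| < ε' ∧ 1 - ε' < x ^ (-b) := by
    have h := (hqev.and hsev).and self_mem_nhdsWithin
    obtain ⟨x, ⟨h1, h2⟩, h3⟩ := h.exists
    exact ⟨x, h3, h1, h2⟩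
  have hx0 : 0 < x := lt_trans one_pos hx1
  set r : ℝ := x ^ (-a) with hr_def
  set s : ℝ := x ^ (-b) with hs_def
  have hr0 : 0 < r := Real.rpow_pos_of_pos hx0 _
  have hs0 : 0 < s := Real.rpow_pos_of_pos hx0 _
  have hr1 : r < 1 := Real.rpow_lt_one_of_one_lt_of_neg hx1 (by linarith)
  have hs1' : s < 1 := Real.rpow_lt_one_of_one_lt_of_neg hx1 (by linarith)
  have hrs_eq : x ^ (-(a+b)) = r * s := by
    rw [hr_def, hs_def, ← Real.rpow_add hx0]; ring_nf
  have hrs0 : 0 < r * s := mul_pos hr0 hs0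
  have hrs1 : r * s < 1 := by
    calc r * s ≤ r * 1 := mul_le_mul_of_nonneg_left hs1'.le hr0.le
      _ = r := mul_one r
      _ < 1 := hr1
  set q : ℝ := (1 - r) / (1 - r * s) with hq_def
  have hq0 : 0 < q := div_pos (by linarith) (by linarith)
  have hqle : q ≤ 1 := by
    rw [hq_def, div_le_one (by linarith)]
    have : r * s ≤ r * 1 := mul_le_mul_of_nonneg_left hs1'.le hr0.le
    rw [mul_one] at this
    linarith
  have hxq' : |q - p| < ε' := by rwa [hrs_eq] at hxq
  -- choose N
  obtain ⟨N, hN⟩ : ∃ N : ℕ, (r*s)^N < ε' := by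
    have := tendsto_pow_atTop_nhds_zero_of_lt_one hrs0.le hrs1
    have h := this.eventually (eventually_lt_nhds hε'pos)
    exact h.exists
  set g : ℝ := (r*s)^N with hg_def
  have hg0 : 0 ≤ g := pow_nonneg hrs0.le N
  have hg1 : g ≤ 1 := pow_le_one₀ hrs0.le hrs1.le
  -- limit values
  set LN : ℝ := ∑ k ∈ Finset.range N, (r^k - r^(k+1)) * s^(k+1) with hLN_def
  set UN : ℝ := (∑ k ∈ Finset.range N, (r^k - r^(k+1)) * s^k) + r^N * s^N with hUN_def
  have hgeo : ∑ k ∈ Finset.range N, (r*s)^k = (1 - g) / (1 - r*s) := by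
    rw [geom_sum_eq (ne_of_lt hrs1), hg_def]
    rw [div_eq_div_iff (by linarith) (by linarith)]
    ring
  have hLN_eq : LN = q * (1 - g) * s := by
    rw [hLN_def]
    have : ∀ k ∈ Finset.range N, (r^k - r^(k+1)) * s^(k+1) = ((1-r)*s) * (r*s)^k := by
      intro k _
      rw [pow_succ, pow_succ, mul_pow]
      ring
    rw [Finset.sum_congr rfl this, ← Finset.mul_sum, hgeo, hq_def]
    field_simp
  have hUN_eq : UN = q * (1 - g) + g := by
    rw [hUN_def]
    have : ∀ k ∈ Finset.range N, (r^k - r^(k+1)) * s^k = (1-r) * (r*s)^k := by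
      intro k _
      rw [pow_succ, mul_pow]
      ring
    rw [Finset.sum_congr rfl this, ← Finset.mul_sum, hgeo, hq_def, hg_def, ← mul_pow]
    field_simp
  have hLN_ge : p - ε < LN := by
    rw [hLN_eq]
    have h1 : p - ε' ≤ q := by
      have := abs_sub_lt_iff.mp hxq'
      linarith [this.2]
    have h2 : 1 - ε' ≤ 1 - g := by linarith
    have h3 : 1 - ε' ≤ s := le_of_lt hxs
    have hpe : 0 ≤ p - ε' := by linarith
    have h1e : 0 ≤ 1 - ε' := by linarith
    have hkey : (p - ε') * (1 - ε') ≤ q * (1 - g) := mul_le_mul h1 h2 h1e hq0.le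
    have hq1 : (p - ε') * (1 - ε') * (1 - ε') ≤ q * (1-g) * s := by
      have hA : 0 ≤ (p - ε') * (1 - ε') := mul_nonneg hpe h1e
      calc (p - ε') * (1 - ε') * (1 - ε') ≤ (q * (1-g)) * (1 - ε') :=
            mul_le_mul_of_nonneg_right hkey h1e
        _ ≤ (q * (1-g)) * s := by
            apply mul_le_mul_of_nonneg_left h3
            exact mul_nonneg hq0.le (by linarith)
    have hexp : p - 3*ε' ≤ (p - ε') * (1 - ε') * (1 - ε') := by
      have e1 : 1 - 2*ε' ≤ (1 - ε') * (1 - ε') := by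
        have := mul_nonneg hε'pos.le hε'pos.le
        ring_nf
        linarith
      have e2 : (p - ε') * (1 - 2*ε') ≤ (p - ε') * ((1 - ε') * (1 - ε')) :=
        mul_le_mul_of_nonneg_left e1 hpe
      have e3 : ε' * p ≤ ε' * 1 := mul_le_mul_of_nonneg_left hplt.le hε'pos.le
      have e4 : 0 ≤ ε' * ε' := mul_nonneg hε'pos.le hε'pos.le
      have e5 : p - 3*ε' ≤ (p - ε') * (1 - 2*ε') := by ring_nf; ring_nf at e3; linarith
      linarith [mul_assoc (p - ε') (1 - ε') (1 - ε')]
    linarith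
  have hUN_lt : UN < p + ε := by
    rw [hUN_eq]
    have h5 := abs_sub_lt_iff.mp hxq'
    have h6 : q * (1 - g) ≤ q := by
      have : q * (1 - g) ≤ q * 1 := mul_le_mul_of_nonneg_left (by linarith) hq0.le
      linarith [this, mul_one q]
    linarith [h5.1, h6]
  -- the bounding functions
  set Lf : ℝ → ℝ := fun v => ∑ k ∈ Finset.range N,
    (F (x^k*v)/F v - F (x^(k+1)*v)/F v) * (G (x^(k+1)*v)/G v) with hLf_def
  set Uf : ℝ → ℝ := fun v => (∑ k ∈ Finset.range N,
    (F (x^k*v)/F v - F (x^(k+1)*v)/F v) * (G (x^k*v)/G v)) + (F (x^N*v)/F v) * (G (x^N*v)/G v)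
    with hUf_def
  -- their limits
  have hLf_tend : Tendsto Lf atTop (nhds LN) := by
    rw [hLf_def, hLN_def]
    apply tendsto_finset_sum
    intro k _
    have h1 := hFr (x^k) (pow_pos hx0 k)
    have h2 := hFr (x^(k+1)) (pow_pos hx0 (k+1))
    have h3 := hGr (x^(k+1)) (pow_pos hx0 (k+1))
    have := (h1.sub h2).mul h3
    rwa [pow_rpow_comm hx0 k a, pow_rpow_comm hx0 (k+1) a, pow_rpow_comm hx0 (k+1) b] at this
  have hUf_tend : Tendsto Uf atTop (nhds UN) := by
    rw [hUf_def, hUN_def]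
    apply Tendsto.add
    · apply tendsto_finset_sum
      intro k _
      have h1 := hFr (x^k) (pow_pos hx0 k)
      have h2 := hFr (x^(k+1)) (pow_pos hx0 (k+1))
      have h3 := hGr (x^k) (pow_pos hx0 k)
      have := (h1.sub h2).mul h3
      rwa [pow_rpow_comm hx0 k a, pow_rpow_comm hx0 (k+1) a, pow_rpow_comm hx0 k b] at this
    · have h1 := hFr (x^N) (pow_pos hx0 N)
      have h2 := hGr (x^N) (pow_pos hx0 N)
      have := h1.mul h2
      rwa [pow_rpow_comm hx0 N a, pow_rpow_comm hx0 N b] at this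
  -- sandwich eventually
  have hsandwich : ∀ᶠ v in atTop, Lf v ≤ M v / (F v * G v) ∧ M v / (F v * G v) ≤ Uf v := by
    filter_upwards [eventually_gt_atTop 0] with v hv
    have hFv : 0 < F v := hFpos v hv
    have hGv : 0 < G v := hGpos v hv
    have hFG : 0 < F v * G v := mul_pos hFv hGv
    -- the grid
    set t : ℕ → ℝ := fun k => x^k * v with ht_def
    have ht0 : t 0 = v := by rw [ht_def]; simp
    have htpos : ∀ k, 0 < t k := fun k => mul_pos (pow_pos hx0 k) hv
    have htmono : ∀ k, t k ≤ t (k+1) := by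
      intro k
      rw [ht_def]
      simp only
      have : (x:ℝ)^k ≤ x^(k+1) := pow_le_pow_right₀ hx1.le (Nat.le_succ k)
      exact mul_le_mul_of_nonneg_right this hv.le
    have hstep : ∀ k, (F (t k) - F (t (k+1))) * G (t (k+1)) ≤ M (t k) - M (t (k+1)) ∧
        M (t k) - M (t (k+1)) ≤ (F (t k) - F (t (k+1))) * G (t k) := by
      intro k
      have h := M_step hX hY hind (t k) (t (k+1)) (htmono k)
      rw [Ioc_split hX _ _ (htmono k)] at h
      exact h
    have htel := telescope M F G t hstep N
    rw [ht0] at htel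
    have hMN0 : 0 ≤ M (t N) := ENNReal.toReal_nonneg
    have hMNle : M (t N) ≤ F (t N) * G (t N) := M_le hind (t N)
    have hlow : (∑ k ∈ Finset.range N, (F (t k) - F (t (k+1))) * G (t (k+1))) ≤ M v := by
      linarith [htel.1]
    have hup : M v ≤ (∑ k ∈ Finset.range N, (F (t k) - F (t (k+1))) * G (t k))
        + F (t N) * G (t N) := by
      linarith [htel.2]
    have hLfv : Lf v = (∑ k ∈ Finset.range N, (F (t k) - F (t (k+1))) * G (t (k+1))) / (F v * G v) := by
      simp only [hLf_def]
      rw [Finset.sum_div]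
      apply Finset.sum_congr rfl
      intro k _
      simp only [ht_def]
      field_simp
    have hUfv : Uf v = ((∑ k ∈ Finset.range N, (F (t k) - F (t (k+1))) * G (t k))
        + F (t N) * G (t N)) / (F v * G v) := by
      simp only [hUf_def]
      rw [add_div, Finset.sum_div]
      congr 1
      · apply Finset.sum_congr rfl
        intro k _
        simp only [ht_def]
        field_simp
      · simp only [ht_def]
        field_simp
    constructor
    · rw [hLfv]
      exact (div_le_div_iff_of_pos_right hFG).mpr hlow
    · rw [hUfv]
      exact (div_le_div_iff_of_pos_right hFG).mpr hup
  -- conclude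
  have hLev : ∀ᶠ v in atTop, p - ε < Lf v :=
    hLf_tend.eventually (eventually_gt_nhds hLN_ge)
  have hUev : ∀ᶠ v in atTop, Uf v < p + ε :=
    hUf_tend.eventually (eventually_lt_nhds hUN_lt)
  filter_upwards [hsandwich, hLev, hUev] with v ⟨h1, h2⟩ h3 h4
  rw [Real.dist_eq, abs_sub_lt_iff]
  constructor
  · exact sub_lt_iff_lt_add.mpr ((lt_of_le_of_lt h2 h4).trans_eq (add_comm p ε))
  · exact sub_lt_comm.mp (lt_of_lt_of_le h3 h1)
end

section
/- Let $U$ be a random variable defined by $U=\delta H^{(1)}(Z)+(1-\delta)(\theta+H^{(0)}(Z))$, where $Z=\min(X,Y)$ for independent $X,Y$ with continuous distribution functions, $\delta=\mathbf{1}\{X\leq Y\}$, $H^{(j)}(v)=\mathbb{P}(Z\leq v,\delta=j)$ and $\theta=\mathbb{P}(\delta=1)$. Assume $H^{(1)}$ and $H^{(0)}$ are continuous. Then $U$ is uniformly distributed on $(0,1)$. -/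
open MeasureTheory ProbabilityTheory
open MeasureTheory ProbabilityTheory Set Filter Topology

lemma aux_transform {Ω : Type*} [MeasureSpace Ω] [IsProbabilityMeasure (ℙ : Measure Ω)]
    (W : Ω → ℝ) (hW : Measurable W) (A : Set Ω) (hA : MeasurableSet A)
    (H : ℝ → ℝ) (hH : ∀ v, H v = (ℙ (A ∩ W ⁻¹' Set.Iic v)).toReal)
    (hHcont : Continuous H) (a : ℝ) (ha : a = (ℙ A).toReal) (t : ℝ) :
    (ℙ (A ∩ {ω | H (W ω) ≤ t})).toReal = min (max t 0) a := by
  have hmono : Monotone H := by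
    intro u v huv
    rw [hH, hH]
    exact ENNReal.toReal_mono (measure_ne_top _ _)
      (measure_mono (inter_subset_inter_right _ (preimage_mono (Iic_subset_Iic.2 huv))))
  have hHnn : ∀ v, 0 ≤ H v := fun v => by rw [hH]; exact ENNReal.toReal_nonneg
  have hHlea : ∀ v, H v ≤ a := fun v => by
    rw [hH, ha]
    exact ENNReal.toReal_mono (measure_ne_top _ _) (measure_mono inter_subset_left)
  have hanneg : 0 ≤ a := ha ▸ ENNReal.toReal_nonneg
  rcases lt_or_ge t 0 with ht | ht
  · have : A ∩ {ω | H (W ω) ≤ t} = ∅ := by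
      ext ω; simp only [mem_inter_iff, mem_setOf_eq, mem_empty_iff_false, iff_false, not_and]
      exact fun _ h => absurd (lt_of_le_of_lt h ht) (not_lt.2 (hHnn _))
    rw [this]
    simp [max_eq_right ht.le, min_eq_left hanneg]
  rcases le_or_gt a t with hat | hat
  · have : A ∩ {ω | H (W ω) ≤ t} = A := by
      ext ω; simp only [mem_inter_iff, mem_setOf_eq, and_iff_left_iff_imp]
      exact fun _ => (hHlea _).trans hat
    rw [this, ← ha, max_eq_left (hanneg.trans hat), min_eq_right hat]
  -- main case: 0 ≤ t < a
  have hmax : max t 0 = t := max_eq_left ht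
  have hmin : min t a = t := min_eq_left hat.le
  -- S bounded above
  set S : Set ℝ := {v | H v ≤ t} with hS
  have hSclosed : IsClosed S := isClosed_Iic.preimage hHcont
  obtain ⟨n, hn⟩ : ∃ n : ℕ, t < H n := by
    have hun : (⋃ n : ℕ, A ∩ W ⁻¹' Set.Iic (n : ℝ)) = A := by
      ext ω
      simp only [mem_iUnion, mem_inter_iff, mem_preimage, mem_Iic]
      constructor
      · rintro ⟨n, h, _⟩; exact h
      · intro h; obtain ⟨n, hn⟩ := exists_nat_ge (W ω); exact ⟨n, h, hn⟩
    have hmon : Monotone (fun n : ℕ => A ∩ W ⁻¹' Set.Iic (n : ℝ)) := by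
      intro m n hmn
      exact inter_subset_inter_right _ (preimage_mono (Iic_subset_Iic.2 (by exact_mod_cast hmn)))
    have h1 : Tendsto (fun n : ℕ => ℙ (A ∩ W ⁻¹' Set.Iic (n : ℝ))) atTop (𝓝 (ℙ A)) := by
      have := tendsto_measure_iUnion_atTop (μ := (ℙ : Measure Ω)) hmon
      rwa [hun] at this
    have h2 : Tendsto (fun n : ℕ => H (n : ℝ)) atTop (𝓝 a) := by
      rw [ha]
      exact ((ENNReal.tendsto_toReal (measure_ne_top ℙ A)).comp h1).congr
        (fun n => (hH _).symm)
    exact (h2.eventually (eventually_gt_nhds hat)).exists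
  have hSbdd : BddAbove S := by
    refine ⟨n, fun v hv => ?_⟩
    by_contra hvn
    exact absurd ((hmono (le_of_not_ge hvn)).trans hv) (not_le.2 hn)
  by_cases hSne : S.Nonempty
  · set v₀ := sSup S with hv₀
    have hv₀mem : v₀ ∈ S := hSclosed.csSup_mem hSne hSbdd
    have hHv₀ : H v₀ = t := by
      refine le_antisymm hv₀mem ?_
      by_contra hlt
      push_neg at hlt
      have : {v | H v < t} ∈ 𝓝 v₀ := (isOpen_lt hHcont continuous_const).mem_nhds hlt
      obtain ⟨ε, hε, hball⟩ := Metric.mem_nhds_iff.1 this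
      have hmem : v₀ + ε / 2 ∈ S := by
        have hd : dist (v₀ + ε / 2) v₀ < ε := by
          rw [Real.dist_eq, show v₀ + ε / 2 - v₀ = ε / 2 by ring,
            abs_of_nonneg (by positivity)]
          linarith
        have h4 : v₀ + ε / 2 ∈ {v | H v < t} := hball (Metric.mem_ball.2 hd)
        show H (v₀ + ε / 2) ≤ t
        exact le_of_lt h4
      linarith [le_csSup hSbdd hmem]
    have hset : A ∩ {ω | H (W ω) ≤ t} = A ∩ W ⁻¹' Set.Iic v₀ := by
      ext ω
      simp only [mem_inter_iff, mem_setOf_eq, mem_preimage, mem_Iic]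
      refine and_congr_right fun _ => ⟨fun h => le_csSup hSbdd h, fun h => (hmono h).trans hHv₀.le⟩
    rw [hset, ← hH, hHv₀, hmax, hmin]
  · -- S empty; show t = 0 and event empty
    have htz : t = 0 := by
      by_contra htne
      have htpos : 0 < t := lt_of_le_of_ne ht (Ne.symm htne)
      have hin : (⋂ n : ℕ, A ∩ W ⁻¹' Set.Iic (-(n : ℝ))) = ∅ := by
        ext ω
        simp only [mem_iInter, mem_inter_iff, mem_preimage, mem_Iic, mem_empty_iff_false,
          iff_false, not_forall]
        obtain ⟨n, hn⟩ := exists_nat_gt (-(W ω))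
        exact ⟨n, fun h => absurd h.2 (not_le.2 (by linarith))⟩
      have hant : Antitone (fun n : ℕ => A ∩ W ⁻¹' Set.Iic (-(n : ℝ))) := by
        intro m n hmn
        exact inter_subset_inter_right _ (preimage_mono (Iic_subset_Iic.2 (by
          simp only [neg_le_neg_iff]; exact_mod_cast hmn)))
      have h1 : Tendsto (fun n : ℕ => ℙ (A ∩ W ⁻¹' Set.Iic (-(n : ℝ)))) atTop (𝓝 0) := by
        have := tendsto_measure_iInter_atTop (μ := (ℙ : Measure Ω))
          (fun n => ((hA.inter (hW measurableSet_Iic)).nullMeasurableSet)) hant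
          ⟨0, measure_ne_top _ _⟩
        rw [hin] at this
        simpa [Function.comp_def] using this
      have h2 : Tendsto (fun n : ℕ => H (-(n : ℝ))) atTop (𝓝 0) := by
        have h3 := ((ENNReal.tendsto_toReal (by simp : (0:ENNReal) ≠ ⊤)).comp h1).congr
          (fun n => (hH _).symm)
        simpa using h3
      obtain ⟨n, hn⟩ := (h2.eventually (eventually_lt_nhds htpos)).exists
      exact hSne ⟨-(n:ℝ), hn.le⟩
    have : A ∩ {ω | H (W ω) ≤ t} = ∅ := by
      ext ω
      simp only [mem_inter_iff, mem_setOf_eq, mem_empty_iff_false, iff_false, not_and]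
      exact fun _ h => hSne ⟨W ω, h⟩
    rw [this, htz]
    simp [min_eq_left hanneg]


/-- Einmahl–Koning representation: with `Z = min(X,Y)`, `δ = 1{X ≤ Y}`,
`H⁽ʲ⁾(v) = ℙ(Z ≤ v, δ = j)` and `θ = ℙ(δ = 1)`, the random variable
`U = δ H⁽¹⁾(Z) + (1-δ)(θ + H⁽⁰⁾(Z))` is uniformly distributed on `(0,1)`. -/
theorem stmt_17 {Ω : Type*} [MeasureSpace Ω] [IsProbabilityMeasure (ℙ : Measure Ω)]
    (X Y : Ω → ℝ) (hX : Measurable X) (hY : Measurable Y) (hind : IndepFun X Y)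
    (hFcont : Continuous fun z => (ℙ {ω | X ω ≤ z}).toReal)
    (hGcont : Continuous fun z => (ℙ {ω | Y ω ≤ z}).toReal)
    (Z : Ω → ℝ) (hZ : Z = fun ω => min (X ω) (Y ω))
    (δ : Ω → ℝ) (hδ : δ = fun ω => if X ω ≤ Y ω then (1:ℝ) else 0)
    (H1 H0 : ℝ → ℝ)
    (hH1 : ∀ v, H1 v = (ℙ {ω | Z ω ≤ v ∧ X ω ≤ Y ω}).toReal)
    (hH0 : ∀ v, H0 v = (ℙ {ω | Z ω ≤ v ∧ ¬ X ω ≤ Y ω}).toReal)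
    (hH1cont : Continuous H1) (hH0cont : Continuous H0)
    (θ : ℝ) (hθ : θ = (ℙ {ω | X ω ≤ Y ω}).toReal)
    (U : Ω → ℝ) (hU : U = fun ω => δ ω * H1 (Z ω) + (1 - δ ω) * (θ + H0 (Z ω))) :
    Measure.map U ℙ = volume.restrict (Set.Ioo (0:ℝ) 1) := by
  set A : Set Ω := {ω | X ω ≤ Y ω} with hAdef
  have hA : MeasurableSet A := measurableSet_le hX hY
  have hZm : Measurable Z := by rw [hZ]; exact hX.min hY
  have hδm : Measurable δ := by
    rw [hδ]; exact Measurable.ite hA measurable_const measurable_const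
  have hUm : Measurable U := by
    rw [hU]
    exact (hδm.mul (hH1cont.measurable.comp hZm)).add
      ((measurable_const.sub hδm).mul
        (measurable_const.add (hH0cont.measurable.comp hZm)))
  have hθ01 : 0 ≤ θ ∧ θ ≤ 1 := by
    constructor
    · rw [hθ]; exact ENNReal.toReal_nonneg
    · rw [hθ]
      have := prob_le_one (μ := (ℙ : Measure Ω)) (s := A)
      calc (ℙ A).toReal ≤ (1 : ENNReal).toReal :=
            ENNReal.toReal_mono (by simp) this
        _ = 1 := by simp
  -- aux applications
  have key1 : ∀ t, (ℙ (A ∩ {ω | H1 (Z ω) ≤ t})).toReal = min (max t 0) θ := by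
    intro t
    refine aux_transform Z hZm A hA H1 (fun v => ?_) hH1cont θ hθ t
    have hs : {ω | Z ω ≤ v ∧ X ω ≤ Y ω} = A ∩ Z ⁻¹' Set.Iic v := by
      ext ω; simp [hAdef, and_comm]
    rw [hH1 v, hs]
  have hcompl : (ℙ Aᶜ).toReal = 1 - θ := by
    rw [prob_compl_eq_one_sub hA, hθ, ENNReal.toReal_sub_of_le (prob_le_one) (by simp)]
    simp
  have key0 : ∀ s, (ℙ (Aᶜ ∩ {ω | H0 (Z ω) ≤ s})).toReal = min (max s 0) (1 - θ) := by
    intro s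
    refine aux_transform Z hZm Aᶜ hA.compl H0 (fun v => ?_) hH0cont (1 - θ) hcompl.symm s
    have hs : {ω | Z ω ≤ v ∧ ¬ X ω ≤ Y ω} = Aᶜ ∩ Z ⁻¹' Set.Iic v := by
      ext ω; simp [hAdef, and_comm]
    rw [hH0 v, hs]
  have hsplit : ∀ t, U ⁻¹' Set.Iic t
      = (A ∩ {ω | H1 (Z ω) ≤ t}) ∪ (Aᶜ ∩ {ω | H0 (Z ω) ≤ t - θ}) := by
    intro t
    ext ω
    by_cases hω : X ω ≤ Y ω
    · simp only [mem_preimage, mem_Iic, hU, hδ, mem_union, mem_inter_iff,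
        mem_compl_iff, hAdef, mem_setOf_eq, hω, if_true, not_true_eq_false, false_and, or_false,
        true_and, one_mul, sub_self, zero_mul, add_zero]
    · simp only [mem_preimage, mem_Iic, hU, hδ, mem_union, mem_inter_iff,
        mem_compl_iff, hAdef, mem_setOf_eq, hω, if_false, false_and, not_false_eq_true,
        true_and, false_or, zero_mul, sub_zero, one_mul, zero_add]
      constructor <;> intro h <;> linarith
  have hmeas2 : ∀ t, MeasurableSet (Aᶜ ∩ {ω | H0 (Z ω) ≤ t - θ}) := fun t =>
    hA.compl.inter ((hH0cont.measurable.comp hZm) measurableSet_Iic)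
  have hmain : ∀ t, (ℙ (U ⁻¹' Set.Iic t)).toReal
      = min (max t 0) θ + min (max (t - θ) 0) (1 - θ) := by
    intro t
    rw [hsplit t, measure_union ?_ (hmeas2 t), ENNReal.toReal_add (measure_ne_top _ _)
      (measure_ne_top _ _), key1, key0]
    exact (disjoint_compl_right (a := A)).mono inter_subset_left inter_subset_left
  have harith : ∀ t, min (max t 0) θ + min (max (t - θ) 0) (1 - θ) = max (min t 1) 0 := by
    intro t
    obtain ⟨h0, h1⟩ := hθ01
    rcases le_total t 0 with h|h <;> rcases le_total t θ with h2|h2 <;>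
      rcases le_total t 1 with h3|h3 <;>
      simp only [min_def, max_def] <;> split_ifs <;> linarith
  refine Measure.ext_of_Iic (Measure.map U ℙ) _ (fun t => ?_)
  rw [Measure.map_apply hUm measurableSet_Iic, Measure.restrict_apply measurableSet_Iic]
  have hl : ℙ (U ⁻¹' Set.Iic t) = ENNReal.ofReal (max (min t 1) 0) := by
    rw [← ENNReal.ofReal_toReal (measure_ne_top ℙ (U ⁻¹' Set.Iic t)), hmain, harith]
  rw [hl]
  rcases lt_or_ge t 1 with h|h
  · have hset : Set.Iic t ∩ Set.Ioo (0:ℝ) 1 = Set.Ioc 0 t := by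
      ext x
      simp only [mem_inter_iff, mem_Iic, mem_Ioo, mem_Ioc]
      constructor
      · rintro ⟨h1, h2, _⟩; exact ⟨h2, h1⟩
      · rintro ⟨h1, h2⟩; exact ⟨h2, h1, lt_of_le_of_lt h2 h⟩
    rw [hset, Real.volume_Ioc, min_eq_left h.le]
    rcases le_total t 0 with h'|h'
    · rw [max_eq_right h', ENNReal.ofReal_zero, ENNReal.ofReal_eq_zero.2 (by linarith)]
    · rw [max_eq_left h']; norm_num
  · have hset : Set.Iic t ∩ Set.Ioo (0:ℝ) 1 = Set.Ioo 0 1 := by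
      ext x
      simp only [mem_inter_iff, mem_Iic, mem_Ioo, and_iff_right_iff_imp]
      exact fun hx => le_trans hx.2.le h
    rw [hset, Real.volume_Ioo, min_eq_right h, max_eq_left zero_le_one]
    norm_num
end
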